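/- Let 0 ≤ τ < 1, let N be the 2×2 complex matrix with rows (0,1) and (1,i), and let M(τ) be the 2×2 matrix with rows (0,1) and (τ,0). Then for every c ∈ ℂ with |c| = 1 and every P ∈ GL₂(ℂ) one has ‖c·P*NP − M(τ)‖ ≥ (1−τ)/4 in the entrywise maximum norm. In particular, M(τ) does not lie in the closure of the Ψ₁-orbit of N. -/

import Mathlib

open Matrix

/-- The entrywise maximum norm `‖X‖ = max_{j,k} |x_{jk}|` on complex matrices. -/
noncomputable def maxNorm {n : ℕ} (X : Matrix (Fin n) (Fin n) ℂ) : ℝ :=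
  ((Finset.univ.sup fun p : Fin n × Fin n => ‖X p.1 p.2‖₊ : NNReal) : ℝ)

lemma entry_le_maxNorm {n : ℕ} (X : Matrix (Fin n) (Fin n) ℂ) (j k : Fin n) :
    ‖X j k‖ ≤ maxNorm X := by
  have := Finset.le_sup (f := fun p : Fin n × Fin n => ‖X p.1 p.2‖₊)
    (Finset.mem_univ (j, k))
  exact_mod_cast this

lemma maxNorm_le {n : ℕ} (X : Matrix (Fin n) (Fin n) ℂ) (r : ℝ)
    (h : ∀ j k, ‖X j k‖ ≤ r) (hr : 0 ≤ r) : maxNorm X ≤ r := by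
  have : (Finset.univ.sup fun p : Fin n × Fin n => ‖X p.1 p.2‖₊) ≤ ⟨r, hr⟩ :=
    Finset.sup_le fun p _ => by
      have := h p.1 p.2
      exact NNReal.coe_le_coe.mp this
  exact_mod_cast this

lemma key_bound (τ : ℝ) (h0 : 0 ≤ τ) (c : ℂ) (P : Matrix (Fin 2) (Fin 2) ℂ)
    (hc : ‖c‖ = 1) :
    (1 - τ) / 4 ≤ maxNorm (c • (Pᴴ * !![(0 : ℂ), 1; 1, Complex.I] * P) -
      !![(0 : ℂ), 1; (τ : ℂ), 0]) := by
  set A : Matrix (Fin 2) (Fin 2) ℂ := c • (Pᴴ * !![(0 : ℂ), 1; 1, Complex.I] * P) with hA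
  set D : Matrix (Fin 2) (Fin 2) ℂ := A - !![(0 : ℂ), 1; (τ : ℂ), 0] with hD
  set ε : ℝ := maxNorm D with hε
  have hcc : c * (starRingEnd ℂ) c = 1 := by
    rw [Complex.mul_conj, Complex.normSq_eq_norm_sq, hc]; norm_num
  have hcs : ‖(starRingEnd ℂ) c‖ = 1 := by rw [RCLike.norm_conj, hc]
  have hid : ∀ j k : Fin 2, (starRingEnd ℂ) c * A j k - c * (starRingEnd ℂ) (A k j)
      = 2 * Complex.I * (starRingEnd ℂ) (P 1 j) * P 1 k := by
    intro j k
    fin_cases j <;> fin_cases k <;>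
      simp [hA, Matrix.mul_apply, Fin.sum_univ_two, Matrix.conjTranspose_apply,
        Matrix.smul_apply, smul_eq_mul, map_add, _root_.map_mul, Complex.conj_I] <;>
      linear_combination (2 * Complex.I * (starRingEnd ℂ) (P 1 _) * P 1 _) * hcc
  have hDe : ∀ j k, ‖D j k‖ ≤ ε := fun j k => entry_le_maxNorm D j k
  have hε0 : 0 ≤ ε := le_trans (norm_nonneg _) (hDe 0 0)
  -- A entries in terms of D
  have hA00 : A 0 0 = D 0 0 := by simp [hD]
  have hA11 : A 1 1 = D 1 1 := by simp [hD]
  have hA01 : A 0 1 = D 0 1 + 1 := by simp [hD]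
  have hA10 : A 1 0 = D 1 0 + (τ : ℂ) := by simp [hD]
  set a : ℝ := ‖P 1 0‖ with ha'
  set b : ℝ := ‖P 1 1‖ with hb'
  have hnorm2 : ∀ j k : Fin 2, ‖2 * Complex.I * (starRingEnd ℂ) (P 1 j) * P 1 k‖
      = 2 * ‖P 1 j‖ * ‖P 1 k‖ := by
    intro j k
    simp [norm_mul, Complex.norm_I, RCLike.norm_conj]
  have ha : a ^ 2 ≤ ε := by
    have h := hid 0 0
    rw [hA00] at h
    have hle : ‖(starRingEnd ℂ) c * D 0 0 - c * (starRingEnd ℂ) (D 0 0)‖ ≤ 2 * ε := by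
      calc ‖(starRingEnd ℂ) c * D 0 0 - c * (starRingEnd ℂ) (D 0 0)‖
          ≤ ‖(starRingEnd ℂ) c * D 0 0‖ + ‖c * (starRingEnd ℂ) (D 0 0)‖ := norm_sub_le _ _
        _ = ‖D 0 0‖ + ‖D 0 0‖ := by rw [norm_mul, norm_mul, hc, hcs, RCLike.norm_conj]; ring
        _ ≤ 2 * ε := by have := hDe 0 0; linarith
    rw [h, hnorm2 0 0] at hle
    nlinarith [norm_nonneg (P 1 0)]
  have hb : b ^ 2 ≤ ε := by
    have h := hid 1 1
    rw [hA11] at h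
    have hle : ‖(starRingEnd ℂ) c * D 1 1 - c * (starRingEnd ℂ) (D 1 1)‖ ≤ 2 * ε := by
      calc ‖(starRingEnd ℂ) c * D 1 1 - c * (starRingEnd ℂ) (D 1 1)‖
          ≤ ‖(starRingEnd ℂ) c * D 1 1‖ + ‖c * (starRingEnd ℂ) (D 1 1)‖ := norm_sub_le _ _
        _ = ‖D 1 1‖ + ‖D 1 1‖ := by rw [norm_mul, norm_mul, hc, hcs, RCLike.norm_conj]; ring
        _ ≤ 2 * ε := by have := hDe 1 1; linarith
    rw [h, hnorm2 1 1] at hle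
    nlinarith [norm_nonneg (P 1 1)]
  -- off-diagonal
  have h := hid 0 1
  rw [hA01, hA10] at h
  have hkey : (starRingEnd ℂ) c - c * (τ : ℂ)
      = 2 * Complex.I * (starRingEnd ℂ) (P 1 0) * P 1 1
        - (starRingEnd ℂ) c * D 0 1 + c * (starRingEnd ℂ) (D 1 0) := by
    have hτ : (starRingEnd ℂ) ((τ : ℂ)) = (τ : ℂ) := Complex.conj_ofReal τ
    rw [map_add (starRingEnd ℂ) (D 1 0) ((τ:ℂ)), hτ] at h
    linear_combination h
  have hlhs : 1 - τ ≤ ‖(starRingEnd ℂ) c - c * (τ : ℂ)‖ := by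
    have h1 : ‖c * (τ : ℂ)‖ = τ := by
      rw [norm_mul, hc, Complex.norm_real, Real.norm_eq_abs, abs_of_nonneg h0]; ring
    have := norm_sub_norm_le ((starRingEnd ℂ) c) (c * (τ : ℂ))
    rw [hcs, h1] at this
    linarith
  have hrhs : ‖(starRingEnd ℂ) c - c * (τ : ℂ)‖ ≤ 2 * (a * b) + ε + ε := by
    rw [hkey]
    calc ‖2 * Complex.I * (starRingEnd ℂ) (P 1 0) * P 1 1
          - (starRingEnd ℂ) c * D 0 1 + c * (starRingEnd ℂ) (D 1 0)‖
        ≤ ‖2 * Complex.I * (starRingEnd ℂ) (P 1 0) * P 1 1 - (starRingEnd ℂ) c * D 0 1‖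
          + ‖c * (starRingEnd ℂ) (D 1 0)‖ := norm_add_le _ _
      _ ≤ ‖2 * Complex.I * (starRingEnd ℂ) (P 1 0) * P 1 1‖ + ‖(starRingEnd ℂ) c * D 0 1‖
          + ‖c * (starRingEnd ℂ) (D 1 0)‖ := by
            have := norm_sub_le (2 * Complex.I * (starRingEnd ℂ) (P 1 0) * P 1 1)
              ((starRingEnd ℂ) c * D 0 1)
            linarith
      _ ≤ 2 * (a * b) + ε + ε := by
            rw [hnorm2 0 1, norm_mul, norm_mul, hc, hcs, RCLike.norm_conj]
            have := hDe 0 1; have := hDe 1 0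
            simp only [one_mul]
            nlinarith [norm_nonneg (P 1 0), norm_nonneg (P 1 1)]
  have hab : a * b ≤ ε := by nlinarith [sq_nonneg (a - b)]
  linarith

/-- For `0 ≤ τ < 1`, `N = [[0,1],[1,i]]` and `M(τ) = [[0,1],[τ,0]]`, one has
`‖c·P*NP − M(τ)‖ ≥ (1−τ)/4` for every `|c| = 1` and `P ∈ GL₂(ℂ)`; in particular `M(τ)`
does not lie in the closure of the `Ψ₁`-orbit of `N`. -/
theorem M_tau_far_from_orbit_of_N (τ : ℝ) (h0 : 0 ≤ τ) (h1 : τ < 1) :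
    (∀ (c : ℂ) (P : Matrix (Fin 2) (Fin 2) ℂ), ‖c‖ = 1 → IsUnit P →
      (1 - τ) / 4 ≤ maxNorm (c • (Pᴴ * !![(0 : ℂ), 1; 1, Complex.I] * P) -
        !![(0 : ℂ), 1; (τ : ℂ), 0])) ∧
    (!![(0 : ℂ), 1; (τ : ℂ), 0]) ∉ closure {X : Matrix (Fin 2) (Fin 2) ℂ |
        ∃ (c : ℂ) (P : Matrix (Fin 2) (Fin 2) ℂ), ‖c‖ = 1 ∧ IsUnit P ∧
          X = c • (Pᴴ * !![(0 : ℂ), 1; 1, Complex.I] * P)} := by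
  have hδ : (0 : ℝ) < (1 - τ) / 4 := by linarith
  refine ⟨fun c P hc _ => key_bound τ h0 c P hc, ?_⟩
  intro hM
  set g : Matrix (Fin 2) (Fin 2) ℂ → ℝ := fun X =>
    ‖X 0 0 - 0‖ + ‖X 0 1 - 1‖ + ‖X 1 0 - (τ : ℂ)‖ + ‖X 1 1 - 0‖ with hg
  have hcont : ∀ (j k : Fin 2) (z : ℂ),
      Continuous fun X : Matrix (Fin 2) (Fin 2) ℂ => ‖X j k - z‖ :=
    fun j k z => ((continuous_id.matrix_elem j k).sub continuous_const).norm
  have hgc : Continuous g :=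
    (((hcont 0 0 0).add (hcont 0 1 1)).add (hcont 1 0 (τ : ℂ))).add (hcont 1 1 0)
  have hSC : {X : Matrix (Fin 2) (Fin 2) ℂ |
        ∃ (c : ℂ) (P : Matrix (Fin 2) (Fin 2) ℂ), ‖c‖ = 1 ∧ IsUnit P ∧
          X = c • (Pᴴ * !![(0 : ℂ), 1; 1, Complex.I] * P)} ⊆
      {X | (1 - τ) / 4 ≤ g X} := by
    rintro X ⟨c, P, hc, -, rfl⟩
    have hkey := key_bound τ h0 c P hc
    set X := c • (Pᴴ * !![(0 : ℂ), 1; 1, Complex.I] * P) with hX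
    have h00 := norm_nonneg (X 0 0 - 0)
    have h01 := norm_nonneg (X 0 1 - 1)
    have h10 := norm_nonneg (X 1 0 - (τ : ℂ))
    have h11 := norm_nonneg (X 1 1 - 0)
    have hle : maxNorm (X - !![(0 : ℂ), 1; (τ : ℂ), 0]) ≤ g X := by
      apply maxNorm_le
      · intro j k
        fin_cases j <;> fin_cases k <;>
          · simp only [hg, Matrix.sub_apply, Fin.mk_zero, Fin.mk_one, Fin.isValue]
            norm_num
            linarith [norm_nonneg (X 0 0), norm_nonneg (X 0 1 - 1),
              norm_nonneg (X 1 0 - (τ : ℂ)), norm_nonneg (X 1 1)]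
      · simp only [hg]
        positivity
    exact le_trans hkey (by simpa using hle)
  have := closure_minimal hSC (isClosed_le continuous_const hgc) hM
  simp only [hg, Set.mem_setOf_eq] at this
  rw [show (!![(0 : ℂ), 1; (τ : ℂ), 0]) 0 0 = 0 by simp,
    show (!![(0 : ℂ), 1; (τ : ℂ), 0]) 0 1 = 1 by simp,
    show (!![(0 : ℂ), 1; (τ : ℂ), 0]) 1 0 = (τ : ℂ) by simp,
    show (!![(0 : ℂ), 1; (τ : ℂ), 0]) 1 1 = 0 by simp] at this
  simp at this
  linarith
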